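/- In any group G satisfying [G'', G, G] = 1, for all u, v in the derived subgroup G' and all x in G, the following commutators are all equal: [u, v, x⁻¹] = [u⁻¹, v, x] = [u, v⁻¹, x] = [[u, v]⁻¹, x] = [u, v, x]⁻¹. -/

import Mathlib

open scoped commutatorElement

private lemma aux_conj {G : Type*} [Group G] (a g : G) (C : Commute a g) :
    g * a * g⁻¹ = a := by rw [← C.eq, mul_inv_cancel_right]

private lemma aux_L1 {G : Type*} [Group G] (c x : G) (C : ∀ z : G, Commute ⁅c, x⁆ z) :
    ⁅c, x⁻¹⁆ = ⁅c, x⁆⁻¹ := by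
  have h1 : ⁅c, x⁻¹⁆ = x⁻¹ * ⁅c, x⁆⁻¹ * x⁻¹⁻¹ := by
    simp only [commutatorElement_def]; group
  rw [h1, aux_conj _ _ ((C x⁻¹).inv_left)]

private lemma aux_L3 {G : Type*} [Group G] (c x : G) (C : ∀ z : G, Commute ⁅c, x⁆ z) :
    ⁅c⁻¹, x⁆ = ⁅c, x⁆⁻¹ := by
  have h1 : ⁅c⁻¹, x⁆ = c⁻¹ * ⁅c, x⁆⁻¹ * c⁻¹⁻¹ := by
    simp only [commutatorElement_def]; group
  rw [h1, aux_conj _ _ ((C c⁻¹).inv_left)]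

private lemma aux_L2 {G : Type*} [Group G] (c : G) (C : ∀ y z : G, Commute ⁅c, y⁆ z)
    (a b : G) : ⁅c, a * b⁆ = ⁅c, a⁆ * ⁅c, b⁆ := by
  have h1 : ⁅c, a * b⁆ = ⁅c, a⁆ * (a * ⁅c, b⁆ * a⁻¹) := by
    simp only [commutatorElement_def]; group
  rw [h1, aux_conj _ _ (C b a)]

private lemma aux_L4 {G : Type*} [Group G] (c : G) (C : ∀ y z : G, Commute ⁅c, y⁆ z)
    (g x : G) : ⁅g * c * g⁻¹, x⁆ = ⁅c, x⁆ := by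
  have h1 : ⁅g * c * g⁻¹, x⁆ = g * ⁅c, g⁻¹ * x * g⁆ * g⁻¹ := by
    simp only [commutatorElement_def]; group
  have h2 : ⁅c, g⁻¹ * x * g⁆ = ⁅c, g⁻¹⁆ * ⁅c, x⁆ * ⁅c, g⁆ := by
    rw [aux_L2 c C, aux_L2 c C, mul_assoc]
  have h3 : ⁅c, g⁆⁻¹ * ⁅c, x⁆ * ⁅c, g⁆ = ⁅c, x⁆ := by
    have := aux_conj ⁅c, x⁆ ⁅c, g⁆⁻¹ ((C x ⁅c, g⁆).inv_right)
    simpa using this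
  rw [h1, h2, aux_L1 c g (C g), h3, aux_conj _ _ (C x g)]

theorem stmt7 {G : Type*} [Group G]
    (h : ⁅⁅derivedSeries G 2, (⊤ : Subgroup G)⁆, (⊤ : Subgroup G)⁆ = (⊥ : Subgroup G))
    (u v : G) (hu : u ∈ derivedSeries G 1) (hv : v ∈ derivedSeries G 1) (x : G) :
    ⁅⁅u, v⁆, x⁻¹⁆ = ⁅⁅u⁻¹, v⁆, x⁆ ∧ ⁅⁅u⁻¹, v⁆, x⁆ = ⁅⁅u, v⁻¹⁆, x⁆ ∧
    ⁅⁅u, v⁻¹⁆, x⁆ = ⁅⁅u, v⁆⁻¹, x⁆ ∧ ⁅⁅u, v⁆⁻¹, x⁆ = ⁅⁅u, v⁆, x⁆⁻¹ := by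
  have central : ∀ a ∈ derivedSeries G 2, ∀ y z : G, Commute ⁅a, y⁆ z := by
    intro a ha y z
    apply commutatorElement_eq_one_iff_commute.mp
    have : ⁅⁅a, y⁆, z⁆ ∈ (⊥ : Subgroup G) := by
      rw [← h]
      exact Subgroup.commutator_mem_commutator
        (Subgroup.commutator_mem_commutator ha (Subgroup.mem_top y)) (Subgroup.mem_top z)
    simpa using this
  have hc : ⁅u, v⁆ ∈ derivedSeries G 2 := Subgroup.commutator_mem_commutator hu hv
  have hci : ⁅u, v⁆⁻¹ ∈ derivedSeries G 2 := (derivedSeries G 2).inv_mem hc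
  have Cc := central _ hc
  have Cci := central _ hci
  have e1 : ⁅⁅u, v⁆, x⁻¹⁆ = ⁅⁅u, v⁆, x⁆⁻¹ := aux_L1 _ _ (Cc x)
  have e4 : ⁅⁅u, v⁆⁻¹, x⁆ = ⁅⁅u, v⁆, x⁆⁻¹ := aux_L3 _ _ (Cc x)
  have e2 : ⁅⁅u⁻¹, v⁆, x⁆ = ⁅⁅u, v⁆, x⁆⁻¹ := by
    have hid : ⁅u⁻¹, v⁆ = u⁻¹ * ⁅u, v⁆⁻¹ * u⁻¹⁻¹ := by
      simp only [commutatorElement_def]; group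
    rw [hid, aux_L4 _ Cci, e4]
  have e3 : ⁅⁅u, v⁻¹⁆, x⁆ = ⁅⁅u, v⁆, x⁆⁻¹ := by
    have hid : ⁅u, v⁻¹⁆ = v⁻¹ * ⁅u, v⁆⁻¹ * v⁻¹⁻¹ := by
      simp only [commutatorElement_def]; group
    rw [hid, aux_L4 _ Cci, e4]
  exact ⟨e1.trans e2.symm, e2.trans e3.symm, e3.trans e4.symm, e4⟩
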